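/- If f belongs to AP(ℝ) (the sup-norm closure of the ℂ-linear span of the characters x ↦ exp(iξx), ξ ∈ ℝ, inside the bounded continuous complex-valued functions on ℝ) and f(x) → 0 as |x| → ∞, then f is identically zero. -/

import Mathlib

/-- The character `x ↦ exp(i ξ x)` as a bounded continuous function on `ℝ`. -/
noncomputable def charFn (ξ : ℝ) : BoundedContinuousFunction ℝ ℂ :=
  BoundedContinuousFunction.ofNormedAddCommGroup
    (fun x : ℝ => Complex.exp ((ξ * x : ℝ) * Complex.I))
    (by continuity) 1
    (fun x => le_of_eq (Complex.norm_exp_ofReal_mul_I (ξ * x)))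

/-- `AP(ℝ)`: the sup-norm closure, inside `C_b(ℝ, ℂ)`, of the `ℂ`-linear span of the
characters `x ↦ exp(i ξ x)`. -/
noncomputable def APset : Set (BoundedContinuousFunction ℝ ℂ) :=
  closure ((Submodule.span ℂ (Set.range charFn) : Submodule ℂ (BoundedContinuousFunction ℝ ℂ)) :
    Set (BoundedContinuousFunction ℝ ℂ))

/-- `f(x) → 0` as `|x| → ∞`. -/
def VanishesAtInfty (f : BoundedContinuousFunction ℝ ℂ) : Prop :=
  Filter.Tendsto (fun x => f x) (Filter.cocompact ℝ) (nhds 0)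

lemma charFn_apply (ξ x : ℝ) : charFn ξ x = Complex.exp ((ξ * x : ℝ) * Complex.I) := rfl

/-- Simultaneous recurrence: for finitely many frequencies, there are arbitrarily large
translation numbers `τ` with `exp(iξτ)` close to `1` for all of them. -/
lemma recurrence (s : Finset ℝ) {δ : ℝ} (hδ : 0 < δ) (N : ℝ) :
    ∃ τ : ℝ, N ≤ τ ∧ ∀ ξ ∈ s, ‖Complex.exp ((ξ * τ : ℝ) * Complex.I) - 1‖ < δ := by
  classical
  set v : ℕ → (s → ℂ) := fun n ξ => Complex.exp (((ξ : ℝ) * n : ℝ) * Complex.I) with hv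
  have hvmem : ∀ n, v n ∈ Metric.closedBall (0 : s → ℂ) 1 := by
    intro n
    rw [Metric.mem_closedBall, dist_zero_right]
    rw [pi_norm_le_iff_of_nonneg zero_le_one]
    intro ξ
    exact le_of_eq (Complex.norm_exp_ofReal_mul_I _)
  obtain ⟨a, -, φ, hφ, hconv⟩ :=
    (isCompact_closedBall (0 : s → ℂ) 1).tendsto_subseq hvmem
  rw [Metric.tendsto_atTop] at hconv
  obtain ⟨k₀, hk₀⟩ := hconv (δ / 2) (half_pos hδ)
  set M : ℕ := ⌈N⌉₊ with hM
  set k₂ : ℕ := max k₀ (φ k₀ + M) with hk₂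
  have hk₂k₀ : k₀ ≤ k₂ := le_max_left _ _
  have hmn : φ k₀ + M ≤ φ k₂ := le_trans (le_max_right _ _) (hφ.le_apply)
  set n : ℕ := φ k₀ with hn
  set m : ℕ := φ k₂ with hm
  have hnm : n ≤ m := le_trans (Nat.le_add_right _ _) hmn
  refine ⟨((m - n : ℕ) : ℝ), ?_, ?_⟩
  · calc N ≤ (M : ℝ) := Nat.le_ceil N
      _ ≤ ((m - n : ℕ) : ℝ) := by
          have : M ≤ m - n := Nat.le_sub_of_add_le (by omega)
          exact_mod_cast this
  · intro ξ hξ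
    have hdist : dist (v m) (v n) < δ := by
      calc dist (v m) (v n) ≤ dist (v m) a + dist (v n) a := dist_triangle_right _ _ _
        _ < δ / 2 + δ / 2 := add_lt_add (hk₀ k₂ hk₂k₀) (hk₀ k₀ le_rfl)
        _ = δ := add_halves δ
    have hcoord : dist (v m ⟨ξ, hξ⟩) (v n ⟨ξ, hξ⟩) < δ :=
      lt_of_le_of_lt (dist_le_pi_dist (v m) (v n) ⟨ξ, hξ⟩) hdist
    have hfac : v m ⟨ξ, hξ⟩ - v n ⟨ξ, hξ⟩ =
        v n ⟨ξ, hξ⟩ * (Complex.exp ((ξ * ((m - n : ℕ) : ℝ) : ℝ) * Complex.I) - 1) := by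
      have hsplit : Complex.exp (((ξ : ℝ) * m : ℝ) * Complex.I) =
          Complex.exp (((ξ : ℝ) * n : ℝ) * Complex.I) *
            Complex.exp ((ξ * ((m - n : ℕ) : ℝ) : ℝ) * Complex.I) := by
        rw [← Complex.exp_add]
        congr 1
        have : ((m - n : ℕ) : ℝ) = (m : ℝ) - (n : ℝ) := Nat.cast_sub hnm
        push_cast [this]
        ring
      simp only [hv, hsplit]
      ring
    have hnorm1 : ‖v n ⟨ξ, hξ⟩‖ = 1 := Complex.norm_exp_ofReal_mul_I _
    calc ‖Complex.exp ((ξ * ((m - n : ℕ) : ℝ) : ℝ) * Complex.I) - 1‖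
        = ‖v n ⟨ξ, hξ⟩‖ * ‖Complex.exp ((ξ * ((m - n : ℕ) : ℝ) : ℝ) * Complex.I) - 1‖ := by
          rw [hnorm1, one_mul]
      _ = ‖v m ⟨ξ, hξ⟩ - v n ⟨ξ, hξ⟩‖ := by rw [← norm_mul, ← hfac]
      _ < δ := by rwa [dist_eq_norm] at hcoord

/-- An almost periodic function which vanishes at infinity is identically zero. -/
theorem ap_vanishing_at_infty_eq_zero (f : BoundedContinuousFunction ℝ ℂ)
    (hf : f ∈ APset) (h0 : VanishesAtInfty f) : f = 0 := by
  classical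
  have key : ∀ x : ℝ, ∀ ε : ℝ, 0 < ε → ‖f x‖ ≤ 4 * ε := by
    intro x ε hε
    -- approximate f by a trigonometric polynomial p
    rw [APset, Metric.mem_closure_iff] at hf
    obtain ⟨p, hp, hfp⟩ := hf ε hε
    rw [SetLike.mem_coe, Finsupp.mem_span_range_iff_exists_finsupp] at hp
    obtain ⟨c, hc⟩ := hp
    -- get the tail bound from vanishing at infinity
    have hev : ∀ᶠ y in Filter.cocompact ℝ, ‖f y‖ < ε := by
      have := h0.eventually (Metric.ball_mem_nhds (0 : ℂ) hε)
      filter_upwards [this] with y hy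
      simpa [Metric.mem_ball, dist_zero_right] using hy
    rw [cocompact_eq_atBot_atTop, Filter.eventually_sup] at hev
    obtain ⟨B, hB⟩ := Filter.eventually_atTop.mp hev.2
    -- constants
    set C : ℝ := ∑ ξ ∈ c.support, ‖c ξ‖ with hC
    have hCnn : 0 ≤ C := Finset.sum_nonneg fun _ _ => norm_nonneg _
    have hδpos : 0 < ε / (C + 1) := div_pos hε (by linarith)
    obtain ⟨τ, hτN, hτ⟩ := recurrence c.support hδpos (B - x)
    have hxτ : B ≤ x + τ := by linarith
    -- bound ‖p (x+τ) - p x‖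
    have hpapply : ∀ y : ℝ, p y = ∑ ξ ∈ c.support, c ξ * Complex.exp ((ξ * y : ℝ) * Complex.I) := by
      intro y
      rw [← hc]
      rw [Finsupp.sum]
      simp [charFn_apply, smul_eq_mul]
    have hpbound : ‖p (x + τ) - p x‖ ≤ ε := by
      rw [hpapply, hpapply, ← Finset.sum_sub_distrib]
      calc ‖∑ ξ ∈ c.support, (c ξ * Complex.exp ((ξ * (x + τ) : ℝ) * Complex.I) -
              c ξ * Complex.exp ((ξ * x : ℝ) * Complex.I))‖
          ≤ ∑ ξ ∈ c.support, ‖c ξ * Complex.exp ((ξ * (x + τ) : ℝ) * Complex.I) -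
              c ξ * Complex.exp ((ξ * x : ℝ) * Complex.I)‖ := norm_sum_le _ _
        _ ≤ ∑ ξ ∈ c.support, ‖c ξ‖ * (ε / (C + 1)) := by
            apply Finset.sum_le_sum
            intro ξ hξ
            have hfac : c ξ * Complex.exp ((ξ * (x + τ) : ℝ) * Complex.I) -
                c ξ * Complex.exp ((ξ * x : ℝ) * Complex.I) =
                c ξ * Complex.exp ((ξ * x : ℝ) * Complex.I) *
                  (Complex.exp ((ξ * τ : ℝ) * Complex.I) - 1) := by
              have : Complex.exp ((ξ * (x + τ) : ℝ) * Complex.I) =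
                  Complex.exp ((ξ * x : ℝ) * Complex.I) *
                    Complex.exp ((ξ * τ : ℝ) * Complex.I) := by
                rw [← Complex.exp_add]; congr 1; push_cast; ring
              rw [this]; ring
            rw [hfac, norm_mul, norm_mul]
            rw [Complex.norm_exp_ofReal_mul_I, mul_one]
            exact mul_le_mul_of_nonneg_left (le_of_lt (hτ ξ hξ)) (norm_nonneg _)
        _ = C * (ε / (C + 1)) := by rw [← Finset.sum_mul]
        _ ≤ ε := by
            rw [div_eq_inv_mul, ← mul_assoc]
            have : C * (C + 1)⁻¹ ≤ 1 := by
              rw [mul_inv_le_iff₀ (by linarith : (0:ℝ) < C + 1)]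
              linarith
            nlinarith
    -- pointwise bounds from ‖f - p‖ < ε
    have hpt : ∀ y : ℝ, ‖f y - p y‖ ≤ dist f p := fun y => by
      have := BoundedContinuousFunction.norm_coe_le_norm (f - p) y
      simpa [dist_eq_norm] using this
    have hft : ‖f (x + τ)‖ < ε := hB (x + τ) hxτ
    calc ‖f x‖ = ‖(f x - p x) + (p x - p (x + τ)) + (p (x + τ) - f (x + τ)) + f (x + τ)‖ := by
          ring_nf
      _ ≤ ‖(f x - p x) + (p x - p (x + τ)) + (p (x + τ) - f (x + τ))‖ + ‖f (x + τ)‖ :=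
          norm_add_le _ _
      _ ≤ ‖(f x - p x) + (p x - p (x + τ))‖ + ‖p (x + τ) - f (x + τ)‖ + ‖f (x + τ)‖ := by
          gcongr; exact norm_add_le _ _
      _ ≤ ‖f x - p x‖ + ‖p x - p (x + τ)‖ + ‖p (x + τ) - f (x + τ)‖ + ‖f (x + τ)‖ := by
          gcongr; exact norm_add_le _ _
      _ ≤ ε + ε + ε + ε := by
          have h1 : ‖f x - p x‖ ≤ ε := le_of_lt (lt_of_le_of_lt (hpt x) hfp)
          have h2 : ‖p x - p (x + τ)‖ ≤ ε := by rwa [norm_sub_rev] at hpbound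
          have h3 : ‖p (x + τ) - f (x + τ)‖ ≤ ε := by
            rw [norm_sub_rev]; exact le_of_lt (lt_of_le_of_lt (hpt _) hfp)
          linarith [le_of_lt hft]
      _ = 4 * ε := by ring
  ext x
  have : ‖f x‖ = 0 := by
    by_contra h
    have hpos : 0 < ‖f x‖ := lt_of_le_of_ne (norm_nonneg _) (Ne.symm h)
    have := key x (‖f x‖ / 5) (by linarith)
    linarith
  simpa using norm_eq_zero.mp this
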